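/- arXiv:1802.10006 — 2 statements merged into one kernel-verified Lean document; each statement's English description precedes it below -/
import Mathlib

section
/- Let X be a finite T₀-space and let A be a subspace of X. Then A is a dbp–retract of X if and only if there exists a continuous function f : X → X such that f ≤ Id_X, f ∘ f = f and f(X) = A. -/
open unitInterval

set_option autoImplicit false

universe u v

/-- The specialization preorder: `x ≤ y` iff every open set containing `y` contains `x`. -/
def specLE {X : Type*} [TopologicalSpace X] (x y : X) : Prop :=
  ∀ U : Set X, IsOpen U → y ∈ U → x ∈ U

/-- A continuous map `i : A → X` is a (Hurewicz) cofibration iff it has the homotopy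
extension property with respect to all topological spaces. -/
def IsCofibration {A : Type*} {X : Type*} [TopologicalSpace A] [TopologicalSpace X]
    (i : C(A, X)) : Prop :=
  ∀ (Z : Type v) [TopologicalSpace Z] (f : C(X, Z)) (H : C(A × I, Z)),
    (∀ a, H (a, 0) = f (i a)) →
    ∃ G : C(X × I, Z),
      (∀ x, G (x, 0) = f x) ∧ ∀ a t, G (i a, t) = H (a, t)

/-- `x` is a down beat point of the subspace `S`:
the set of points of `S` strictly below `x` has a maximum. -/
def IsDownBeatPoint {X : Type*} [TopologicalSpace X] (S : Set X) (x : X) : Prop :=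
  x ∈ S ∧ ∃ m ∈ S, m ≠ x ∧ specLE m x ∧
    ∀ z ∈ S, z ≠ x → specLE z x → specLE z m

/-- `T` is a dbp–retract of `S`: `T` is obtained from `S` by successively
removing down beat points. -/
inductive IsDbpRetract {X : Type*} [TopologicalSpace X] : Set X → Set X → Prop
  | refl (S : Set X) : IsDbpRetract S S
  | step {S T : Set X} (x : X) (hx : IsDownBeatPoint S x)
      (h : IsDbpRetract (S \ {x}) T) : IsDbpRetract S T

/-- The minimal open set containing `x` (in a finite space): the intersection of all
open sets containing `x`. -/
def minOpen {X : Type*} [TopologicalSpace X] (x : X) : Set X :=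
  ⋂₀ {U : Set X | IsOpen U ∧ x ∈ U}

section aux
variable {X : Type u} [TopologicalSpace X]

lemma specLE_refl (x : X) : specLE x x := fun _ _ h => h

lemma specLE_trans {x y z : X} (h1 : specLE x y) (h2 : specLE y z) : specLE x z :=
  fun U hU hz => h1 U hU (h2 U hU hz)

lemma specLE_antisymm [T0Space X] {x y : X} (h1 : specLE x y) (h2 : specLE y x) : x = y :=
  (inseparable_iff_forall_isOpen.2 fun U hU => ⟨fun hx => h2 U hU hx, fun hy => h1 U hU hy⟩).eq

lemma specLE_of_continuous {f : X → X} (hf : Continuous f) {a b : X} (h : specLE a b) :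
    specLE (f a) (f b) := fun U hU hb => h (f ⁻¹' U) (hU.preimage hf) hb

lemma mem_minOpen_iff {z x : X} : z ∈ minOpen x ↔ specLE z x := by
  simp only [minOpen, Set.mem_sInter, Set.mem_setOf_eq, specLE]
  exact ⟨fun h U hU hx => h U ⟨hU, hx⟩, fun h U hU => h U hU.1 hU.2⟩

lemma isOpen_minOpen [Finite X] (x : X) : IsOpen (minOpen x) :=
  Set.Finite.isOpen_sInter (Set.toFinite _) fun _ hU => hU.1

lemma continuous_of_specMono [Finite X] {f : X → X}
    (hf : ∀ a b : X, specLE a b → specLE (f a) (f b)) : Continuous f := by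
  rw [continuous_def]
  intro U hU
  have h : f ⁻¹' U = ⋃ y ∈ f ⁻¹' U, minOpen y := by
    ext z
    simp only [Set.mem_iUnion]
    constructor
    · intro hz; exact ⟨z, hz, mem_minOpen_iff.2 (specLE_refl z)⟩
    · rintro ⟨y, hy, hz⟩
      exact hf z y (mem_minOpen_iff.1 hz) U hU hy
  rw [h]
  exact isOpen_biUnion fun y _ => isOpen_minOpen y

lemma dbp_subset {S T : Set X} (h : IsDbpRetract S T) : T ⊆ S := by
  induction h with
  | refl => exact subset_rfl
  | step x hx h ih => exact ih.trans Set.diff_subset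

lemma dbp_retraction {S T : Set X} (h : IsDbpRetract S T) :
    ∃ g : X → X, (∀ a b, a ∈ S → b ∈ S → specLE a b → specLE (g a) (g b)) ∧
      (∀ x ∈ S, g x ∈ T ∧ specLE (g x) x) ∧ (∀ x ∈ T, g x = x) := by
  classical
  induction h with
  | refl S => exact ⟨id, fun a b _ _ h => h, fun x hx => ⟨hx, specLE_refl x⟩, fun _ _ => rfl⟩
  | step x hx h ih =>
    rename_i S T
    obtain ⟨g', hmono, hmem, hfix⟩ := ih
    obtain ⟨hxS, m, hmS, hmx, hmle, hmax⟩ := hx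
    set r : X → X := fun z => if z = x then m else z with hr
    have hrmem : ∀ z ∈ S, r z ∈ S \ {x} := by
      intro z hz
      by_cases hzx : z = x
      · simp only [hr, hzx, if_pos rfl]
        exact ⟨hmS, hmx⟩
      · simp only [hr, if_neg hzx]
        exact ⟨hz, hzx⟩
    have hrle : ∀ z ∈ S, specLE (r z) z := by
      intro z hz
      by_cases hzx : z = x
      · simp only [hr, hzx, if_pos rfl]; exact hmle
      · simp only [hr, if_neg hzx]; exact specLE_refl z
    refine ⟨fun z => g' (r z), ?_, ?_, ?_⟩
    · intro a b ha hb hab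
      refine hmono (r a) (r b) (hrmem a ha) (hrmem b hb) ?_
      by_cases hax : a = x <;> by_cases hbx : b = x
      · simp [hr, hax, hbx, specLE_refl]
      · simp only [hr, hax, if_pos rfl, if_neg hbx]
        exact specLE_trans hmle (hax ▸ hab)
      · simp only [hr, if_neg hax, hbx, if_pos rfl]
        exact hmax a ha hax (hbx ▸ hab)
      · simp only [hr, if_neg hax, if_neg hbx]
        exact hab
    · intro z hz
      obtain ⟨h1, h2⟩ := hmem (r z) (hrmem z hz)
      exact ⟨h1, specLE_trans h2 (hrle z hz)⟩
    · intro t ht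
      have htS : t ∈ S \ {x} := dbp_subset h ht
      show g' (if t = x then m else t) = t
      rw [if_neg (fun (he : t = x) => htS.2 (Set.mem_singleton_iff.mpr he))]
      exact hfix t ht

lemma exists_specMin_aux [Finite X] [T0Space X] :
    ∀ n (B : Set X), B.ncard ≤ n → B.Nonempty →
      ∃ x ∈ B, ∀ z ∈ B, specLE z x → z = x := by
  intro n
  induction n with
  | zero =>
    rintro B hc ⟨x, hx⟩
    rw [Nat.le_zero, Set.ncard_eq_zero (Set.toFinite B)] at hc
    exact absurd hx (hc ▸ Set.notMem_empty x)
  | succ n ih =>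
    rintro B hc ⟨x, hx⟩
    by_cases h : ∃ z ∈ B, specLE z x ∧ z ≠ x
    · obtain ⟨z0, hz0B, hz0x, hz0ne⟩ := h
      set B' : Set X := {z ∈ B | specLE z x ∧ z ≠ x} with hB'
      have hB'sub : B' ⊆ B := fun z hz => hz.1
      have hxB' : x ∉ B' := fun hz => hz.2.2 rfl
      have hlt : B'.ncard < B.ncard :=
        Set.ncard_lt_ncard ⟨hB'sub, fun hsub => hxB' (hsub hx)⟩ (Set.toFinite B)
      obtain ⟨y, hyB', hymin⟩ := ih B' (by omega) ⟨z0, hz0B, hz0x, hz0ne⟩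
      refine ⟨y, hyB'.1, fun z hzB hzy => ?_⟩
      by_cases hzx : z = x
      · exfalso
        have hyx : y = x := specLE_antisymm hyB'.2.1 (hzx ▸ hzy)
        exact hxB' (hyx ▸ hyB')
      · exact hymin z ⟨hzB, specLE_trans hzy hyB'.2.1, hzx⟩ hzy
    · push_neg at h
      exact ⟨x, hx, fun z hz hzx => h z hz hzx⟩

lemma exists_specMin [Finite X] [T0Space X] (B : Set X) (hB : B.Nonempty) :
    ∃ x ∈ B, ∀ z ∈ B, specLE z x → z = x :=
  exists_specMin_aux B.ncard B le_rfl hB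

lemma dbp_of_retraction [Finite X] [T0Space X] (f : X → X)
    (hmono : ∀ a b : X, specLE a b → specLE (f a) (f b))
    (hle : ∀ x, specLE (f x) x) (hidem : ∀ x, f (f x) = f x) :
    ∀ n (S : Set X), S.ncard ≤ n → Set.range f ⊆ S → IsDbpRetract S (Set.range f) := by
  intro n
  induction n with
  | zero =>
    intro S hc hsub
    rw [Nat.le_zero, Set.ncard_eq_zero (Set.toFinite S)] at hc
    have hr : Set.range f = ∅ := Set.subset_empty_iff.1 (hc ▸ hsub)
    rw [hc, hr]
    exact IsDbpRetract.refl _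
  | succ n ih =>
    intro S hc hsub
    by_cases heq : S ⊆ Set.range f
    · rw [subset_antisymm heq hsub]
      exact IsDbpRetract.refl _
    · obtain ⟨x0, hx0S, hx0A⟩ := Set.not_subset.1 heq
      obtain ⟨x, hxmem, hxmin⟩ := exists_specMin (S \ Set.range f) ⟨x0, hx0S, hx0A⟩
      have hfxA : f x ∈ Set.range f := ⟨x, rfl⟩
      have hfxne : f x ≠ x := fun h => hxmem.2 (h ▸ hfxA)
      have hdbp : IsDownBeatPoint S x := by
        refine ⟨hxmem.1, f x, hsub hfxA, hfxne, hle x, ?_⟩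
        intro z hzS hzx hzlex
        by_cases hzA : z ∈ Set.range f
        · obtain ⟨w, hw⟩ := hzA
          have hfz : f z = z := by rw [← hw, hidem]
          have h2 := hmono z x hzlex
          rwa [hfz] at h2
        · exact absurd (hxmin z ⟨hzS, hzA⟩ hzlex) hzx
      refine IsDbpRetract.step x hdbp (ih (S \ {x}) ?_ ?_)
      · have := Set.ncard_diff_singleton_lt_of_mem hxmem.1 (Set.toFinite S)
        omega
      · intro a ha
        exact ⟨hsub ha, fun he => hxmem.2 ((Set.mem_singleton_iff.1 he) ▸ ha)⟩

end aux

/-- Let `X` be a finite T₀-space and `A ⊆ X`. Then `A` is a dbp–retract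
of `X` iff there is a continuous `f : X → X` with `f ≤ Id_X`, `f ∘ f = f` and `f(X) = A`. -/
theorem dbpRetract_iff_exists_idempotent_le_id
    {X : Type u} [TopologicalSpace X] [Finite X] [T0Space X] (A : Set X) :
    IsDbpRetract (Set.univ : Set X) A ↔
      ∃ f : C(X, X), (∀ x, specLE (f x) x) ∧ (∀ x, f (f x) = f x) ∧ Set.range f = A := by
  constructor
  · intro h
    obtain ⟨g, hmono, hmem, hfix⟩ := dbp_retraction h
    have hcont : Continuous g :=
      continuous_of_specMono fun a b hab => hmono a b trivial trivial hab
    refine ⟨⟨g, hcont⟩, ?_, ?_, ?_⟩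
    · intro x; exact (hmem x trivial).2
    · intro x; exact hfix (g x) (hmem x trivial).1
    · ext y
      constructor
      · rintro ⟨x, rfl⟩
        exact (hmem x trivial).1
      · intro hy
        exact ⟨y, hfix y hy⟩
  · rintro ⟨f, hle, hidem, hrange⟩
    have hmono : ∀ a b : X, specLE a b → specLE (f a) (f b) :=
      fun a b h => specLE_of_continuous f.continuous h
    have := dbp_of_retraction (f : X → X) hmono hle hidem
      (Set.univ : Set X).ncard Set.univ le_rfl (Set.subset_univ _)
    rwa [hrange] at this
end

section
/- Let Y be a finite T₀-space, let X be a dbp–retract of Y and let A ⊆ X. Then A is a dbp–retract of X if and only if A is a dbp–retract of Y. -/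
open unitInterval

set_option autoImplicit false

universe u v

section Aux

variable {Y : Type u} [TopologicalSpace Y]

lemma specLE_trans_s6 {a b c : Y} (h1 : specLE a b) (h2 : specLE b c) : specLE a c :=
  fun U hU hc => h1 U hU (h2 U hU hc)

lemma specLE_antisymm_s6 [T0Space Y] {a b : Y} (h1 : specLE a b) (h2 : specLE b a) : a = b := by
  have hab : a ⤳ b := specializes_iff_forall_open.mpr h1
  have hba : b ⤳ a := specializes_iff_forall_open.mpr h2
  exact (hab.antisymm hba).eq

lemma IsDbpRetract.subset {S T : Set Y} (h : IsDbpRetract S T) : T ⊆ S := by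
  induction h with
  | refl S => exact subset_rfl
  | step x hx h ih => exact ih.trans Set.diff_subset

lemma IsDbpRetract.trans' {S T U : Set Y} (h1 : IsDbpRetract S T) (h2 : IsDbpRetract T U) :
    IsDbpRetract S U := by
  induction h1 with
  | refl S => exact h2
  | step x hx h ih => exact .step x hx (ih h2)

lemma IsDbpRetract.remove_dbp [T0Space Y] {S A : Set Y} (h : IsDbpRetract S A) :
    ∀ x, IsDownBeatPoint S x → x ∉ A → IsDbpRetract (S \ {x}) A := by
  induction h with
  | refl S => intro x hx hxA; exact absurd hx.1 hxA
  | @step S T y hy h ih =>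
    intro x hx hxA
    by_cases hxy : x = y
    · subst hxy; exact h
    · obtain ⟨hxS, m, hmS, hmx, hmlex, hmmax⟩ := hx
      obtain ⟨hyS, m', hm'S, hm'y, hm'ley, hm'max⟩ := hy
      have hyx : y ≠ x := fun hh => hxy hh.symm
      -- x is a down beat point of S \ {y}
      have hxbp : IsDownBeatPoint (S \ {y}) x := by
        by_cases hmy : m = y
        · subst hmy
          refine ⟨⟨hxS, hxy⟩, m', ⟨hm'S, hm'y⟩, ?_, specLE_trans_s6 hm'ley hmlex, ?_⟩
          · intro hh
            exact hxy (specLE_antisymm_s6 (hh ▸ hm'ley) hmlex)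
          · intro z hz hzx hzlex
            exact hm'max z hz.1 hz.2 (hmmax z hz.1 hzx hzlex)
        · exact ⟨⟨hxS, hxy⟩, m, ⟨hmS, hmy⟩, hmx, hmlex,
            fun z hz hzx hzlex => hmmax z hz.1 hzx hzlex⟩
      have h2 := ih x hxbp hxA
      -- y is a down beat point of S \ {x}
      have hybp : IsDownBeatPoint (S \ {x}) y := by
        by_cases hm'x : m' = x
        · subst hm'x
          have hmy : m ≠ y := by
            intro hh
            exact hxy (specLE_antisymm_s6 hm'ley (hh ▸ hmlex))
          refine ⟨⟨hyS, hyx⟩, m, ⟨hmS, hmx⟩, hmy, specLE_trans_s6 hmlex hm'ley, ?_⟩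
          intro z hz hzy hzley
          exact hmmax z hz.1 hz.2 (hm'max z hz.1 hzy hzley)
        · exact ⟨⟨hyS, hyx⟩, m', ⟨hm'S, hm'x⟩, hm'y, hm'ley,
            fun z hz hzy hzley => hm'max z hz.1 hzy hzley⟩
      have heq : (S \ {x}) \ {y} = (S \ {y}) \ {x} := by
        ext z; simp only [Set.mem_diff, Set.mem_singleton_iff]; tauto
      exact .step y hybp (heq ▸ h2)

lemma IsDbpRetract.of_chain [T0Space Y] {S X : Set Y} (hc : IsDbpRetract S X) :
    ∀ A : Set Y, A ⊆ X → IsDbpRetract S A → IsDbpRetract X A := by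
  induction hc with
  | refl S => exact fun _ _ h => h
  | @step S T y hy hc ih =>
    intro A hAX h
    have hsub : T ⊆ S \ {y} := hc.subset
    exact ih A hAX (h.remove_dbp y hy (fun hA => (hsub (hAX hA)).2 rfl))

end Aux

/-- Let `Y` be a finite T₀-space, `X` a dbp–retract of `Y` and `A ⊆ X`.
Then `A` is a dbp–retract of `X` iff `A` is a dbp–retract of `Y`. -/
theorem dbpRetract_iff_dbpRetract_univ
    {Y : Type u} [TopologicalSpace Y] [Finite Y] [T0Space Y]
    (X A : Set Y) (hX : IsDbpRetract (Set.univ : Set Y) X) (hAX : A ⊆ X) :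
    IsDbpRetract X A ↔ IsDbpRetract (Set.univ : Set Y) A := by
  exact ⟨fun h => hX.trans' h, fun h => IsDbpRetract.of_chain hX A hAX h⟩
end
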